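/- arXiv:2212.12445 — 5 statements merged into one kernel-verified Lean document; each statement's English description precedes it below -/
import Mathlib

section
/- Let (X,f) and (Y,g) be BTDSs, where (X,τ1,τ2) and (Y,ψ1,ψ2) are bitopological spaces, and suppose f ≈^H_F g via a BTDS-homotopy H. If (Y,ψ1,ψ2) is pairwise T3 and pairwise locally compact, then Y has the H-Rothberger property if and only if Y has the H-almost Rothberger property. -/
open Set Topology

universe u v w

/-- A map between bitopological spaces is pairwise continuous if it is continuous
with respect to the first topologies and with respect to the second topologies. -/
def PairwiseContinuous {X : Type u} {Y : Type v}
    (t1 t2 : TopologicalSpace X) (s1 s2 : TopologicalSpace Y) (f : X → Y) : Prop :=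
  Continuous[t1, s1] f ∧ Continuous[t2, s2] f

/-- The product topology on `X × [0,1]` where `X` carries `t` and `[0,1]` the usual topology. -/
def prodI {X : Type u} (t : TopologicalSpace X) : TopologicalSpace (X × unitInterval) :=
  @instTopologicalSpaceProd X unitInterval t inferInstance

/-- A BTDS-homotopy between `f` and `g` relative to `F`:
a pairwise continuous `H : X × [0,1] → Y` with `H(x,0) = F(f x)` and `H(x,1) = g(F x)`. -/
def IsBTDSHomotopy {X : Type u} {Y : Type v}
    (t1 t2 : TopologicalSpace X) (s1 s2 : TopologicalSpace Y)
    (f : X → X) (g : Y → Y) (F : X → Y) (H : X × unitInterval → Y) : Prop :=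
  PairwiseContinuous (prodI t1) (prodI t2) s1 s2 H ∧
    (∀ x, H (x, 0) = F (f x)) ∧ (∀ x, H (x, 1) = g (F x))

/-- A BTDS-iteration homotopy between `f` and `g` relative to `F`. -/
def IsBTDSIterHomotopy {X : Type u} {Y : Type v}
    (t1 t2 : TopologicalSpace X) (s1 s2 : TopologicalSpace Y)
    (f : X → X) (g : Y → Y) (F : X → Y) (H : X × unitInterval → Y) : Prop :=
  PairwiseContinuous (prodI t1) (prodI t2) s1 s2 H ∧
    (∀ (x : X) (n : ℕ), H (f^[n + 1] x, 0) = F (f (f^[n] x))) ∧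
    (∀ (x : X) (n : ℕ), H (f^[n + 1] x, 1) = g (F (f^[n] x)))

/-- A bitopological path in `(X, s1, s2)` from `x` to `y`. -/
def IsBitopPath {X : Type u} (s1 s2 : TopologicalSpace X)
    (F : unitInterval → X) (x y : X) : Prop :=
  PairwiseContinuous inferInstance inferInstance s1 s2 F ∧ F 0 = x ∧ F 1 = y

/-- A BTDS-path homotopy between `f` and `g` relative to the bitopological path `F`
from `x` to `y`. -/
def IsBTDSPathHomotopy {X : Type u} (s1 s2 : TopologicalSpace X)
    (f : unitInterval → unitInterval) (g : X → X) (F : unitInterval → X) (x y : X)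
    (H : unitInterval × unitInterval → X) : Prop :=
  PairwiseContinuous inferInstance inferInstance s1 s2 H ∧
    (∀ m : unitInterval, 0 < (m : ℝ) → (m : ℝ) < 1 →
      H (m, 0) = F (f m) ∧ H (m, 1) = g (F m)) ∧
    (∀ n : unitInterval, H (0, n) = x ∧ H (1, n) = y)

/-- `𝒪_i`: the collection of all open covers w.r.t. the topology `s`. -/
def OpenCovers {Y : Type v} (s : TopologicalSpace Y) : Set (Set (Set Y)) :=
  {𝒰 | (∀ U ∈ 𝒰, IsOpen[s] U) ∧ ⋃₀ 𝒰 = univ}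

/-- `𝒪^D_{ij}`: families of `si`-open sets whose union is `sj`-dense. -/
def DenseFamilies {Y : Type v} (si sj : TopologicalSpace Y) : Set (Set (Set Y)) :=
  {𝒰 | (∀ U ∈ 𝒰, IsOpen[si] U) ∧ @closure Y sj (⋃₀ 𝒰) = univ}

/-- `𝒪̄_{ij}`: families of `si`-open sets whose `sj`-closures cover `Y`. -/
def ClosureCovers {Y : Type v} (si sj : TopologicalSpace Y) : Set (Set (Set Y)) :=
  {𝒰 | (∀ U ∈ 𝒰, IsOpen[si] U) ∧ (⋃ U ∈ 𝒰, @closure Y sj U) = univ}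

/-- `S_1^H(𝒜, ℬ)` relative to the homotopy `H`. -/
def S1H {X : Type u} {Y : Type v} (H : X × unitInterval → Y)
    (A B : Set (Set (Set Y))) : Prop :=
  ∀ 𝒰 : ℕ → Set (Set Y), (∀ n, 𝒰 n ∈ A) →
    ∀ x : X, (∀ n, H (x, 0) ∈ ⋃₀ 𝒰 n) →
      ∃ U : ℕ → Set Y, (∀ n, U n ∈ 𝒰 n) ∧ (∀ n, H (x, 1) ∈ U n) ∧ Set.range U ∈ B

/-- `S_fin^H(𝒜, ℬ)` relative to the homotopy `H`. -/
def SfinH {X : Type u} {Y : Type v} (H : X × unitInterval → Y)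
    (A B : Set (Set (Set Y))) : Prop :=
  ∀ 𝒰 : ℕ → Set (Set Y), (∀ n, 𝒰 n ∈ A) →
    ∀ x : X, (∀ n, H (x, 0) ∈ ⋃₀ 𝒰 n) →
      ∃ 𝒱 : ℕ → Set (Set Y), (∀ n, (𝒱 n).Finite ∧ 𝒱 n ⊆ 𝒰 n) ∧
        (∀ n, H (x, 1) ∈ ⋃₀ 𝒱 n) ∧ (⋃ n, 𝒱 n) ∈ B

/-- `S_1^PH(𝒜, ℬ)` relative to the path homotopy `H`. -/
def S1PH {X : Type u} (H : unitInterval × unitInterval → X)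
    (A B : Set (Set (Set X))) : Prop :=
  ∀ 𝒰 : ℕ → Set (Set X), (∀ n, 𝒰 n ∈ A) →
    ∀ m : unitInterval, 0 < (m : ℝ) → (m : ℝ) < 1 → (∀ n, H (m, 0) ∈ ⋃₀ 𝒰 n) →
      ∃ U : ℕ → Set X, (∀ n, U n ∈ 𝒰 n) ∧ (∀ n, H (m, 1) ∈ U n) ∧ Set.range U ∈ B

/-- `S_fin^PH(𝒜, ℬ)` relative to the path homotopy `H`. -/
def SfinPH {X : Type u} (H : unitInterval × unitInterval → X)
    (A B : Set (Set (Set X))) : Prop :=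
  ∀ 𝒰 : ℕ → Set (Set X), (∀ n, 𝒰 n ∈ A) →
    ∀ m : unitInterval, 0 < (m : ℝ) → (m : ℝ) < 1 → (∀ n, H (m, 0) ∈ ⋃₀ 𝒰 n) →
      ∃ 𝒱 : ℕ → Set (Set X), (∀ n, (𝒱 n).Finite ∧ 𝒱 n ⊆ 𝒰 n) ∧
        (∀ n, H (m, 1) ∈ ⋃₀ 𝒱 n) ∧ (⋃ n, 𝒱 n) ∈ B

/-- `Y` has the H-Rothberger property (both the (1,2) and the (2,1) versions). -/
def HRothberger {X : Type u} {Y : Type v} (H : X × unitInterval → Y)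
    (s1 s2 : TopologicalSpace Y) : Prop :=
  S1H H (OpenCovers s1) (OpenCovers s2) ∧ S1H H (OpenCovers s2) (OpenCovers s1)

/-- `Y` has the H-almost Rothberger property. -/
def HAlmostRothberger {X : Type u} {Y : Type v} (H : X × unitInterval → Y)
    (s1 s2 : TopologicalSpace Y) : Prop :=
  S1H H (OpenCovers s1) (ClosureCovers s1 s2) ∧ S1H H (OpenCovers s2) (ClosureCovers s2 s1)

/-- `Y` has the H-weak Rothberger property. -/
def HWeakRothberger {X : Type u} {Y : Type v} (H : X × unitInterval → Y)
    (s1 s2 : TopologicalSpace Y) : Prop :=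
  S1H H (OpenCovers s1) (DenseFamilies s1 s2) ∧ S1H H (OpenCovers s2) (DenseFamilies s2 s1)

/-- `Y` has the H-Menger property. -/
def HMenger {X : Type u} {Y : Type v} (H : X × unitInterval → Y)
    (s1 s2 : TopologicalSpace Y) : Prop :=
  SfinH H (OpenCovers s1) (OpenCovers s2) ∧ SfinH H (OpenCovers s2) (OpenCovers s1)

/-- `Y` has the H-almost Menger property. -/
def HAlmostMenger {X : Type u} {Y : Type v} (H : X × unitInterval → Y)
    (s1 s2 : TopologicalSpace Y) : Prop :=
  SfinH H (OpenCovers s1) (ClosureCovers s1 s2) ∧ SfinH H (OpenCovers s2) (ClosureCovers s2 s1)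

/-- `Y` has the H-weak Menger property. -/
def HWeakMenger {X : Type u} {Y : Type v} (H : X × unitInterval → Y)
    (s1 s2 : TopologicalSpace Y) : Prop :=
  SfinH H (OpenCovers s1) (DenseFamilies s1 s2) ∧ SfinH H (OpenCovers s2) (DenseFamilies s2 s1)

/-- `X` has the PH-Rothberger property. -/
def PHRothberger {X : Type u} (H : unitInterval × unitInterval → X)
    (s1 s2 : TopologicalSpace X) : Prop :=
  S1PH H (OpenCovers s1) (OpenCovers s2) ∧ S1PH H (OpenCovers s2) (OpenCovers s1)

/-- `X` has the PH-almost Rothberger property. -/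
def PHAlmostRothberger {X : Type u} (H : unitInterval × unitInterval → X)
    (s1 s2 : TopologicalSpace X) : Prop :=
  S1PH H (OpenCovers s1) (ClosureCovers s1 s2) ∧ S1PH H (OpenCovers s2) (ClosureCovers s2 s1)

/-- `X` has the PH-weak Rothberger property. -/
def PHWeakRothberger {X : Type u} (H : unitInterval × unitInterval → X)
    (s1 s2 : TopologicalSpace X) : Prop :=
  S1PH H (OpenCovers s1) (DenseFamilies s1 s2) ∧ S1PH H (OpenCovers s2) (DenseFamilies s2 s1)

/-- `X` has the PH-Menger property. -/
def PHMenger {X : Type u} (H : unitInterval × unitInterval → X)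
    (s1 s2 : TopologicalSpace X) : Prop :=
  SfinPH H (OpenCovers s1) (OpenCovers s2) ∧ SfinPH H (OpenCovers s2) (OpenCovers s1)

/-- `X` has the PH-almost Menger property. -/
def PHAlmostMenger {X : Type u} (H : unitInterval × unitInterval → X)
    (s1 s2 : TopologicalSpace X) : Prop :=
  SfinPH H (OpenCovers s1) (ClosureCovers s1 s2) ∧ SfinPH H (OpenCovers s2) (ClosureCovers s2 s1)

/-- `X` has the PH-weak Menger property. -/
def PHWeakMenger {X : Type u} (H : unitInterval × unitInterval → X)
    (s1 s2 : TopologicalSpace X) : Prop :=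
  SfinPH H (OpenCovers s1) (DenseFamilies s1 s2) ∧ SfinPH H (OpenCovers s2) (DenseFamilies s2 s1)

/-- `s1` is regular with respect to `s2`. -/
def RegularWRT {Y : Type v} (s1 s2 : TopologicalSpace Y) : Prop :=
  ∀ (x : Y) (P : Set Y), IsClosed[s1] P → x ∉ P →
    ∃ U V : Set Y, IsOpen[s1] U ∧ IsOpen[s2] V ∧ x ∈ U ∧ P ⊆ V ∧ U ∩ V = ∅

/-- `(Y, s1, s2)` is pairwise T1. -/
def PairwiseT1 {Y : Type v} (s1 s2 : TopologicalSpace Y) : Prop :=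
  ∀ x y : Y, x ≠ y →
    ∃ U V : Set Y, IsOpen[s1] U ∧ IsOpen[s2] V ∧ x ∈ U ∧ y ∉ U ∧ y ∈ V ∧ x ∉ V

/-- `(Y, s1, s2)` is pairwise regular. -/
def PairwiseRegular {Y : Type v} (s1 s2 : TopologicalSpace Y) : Prop :=
  RegularWRT s1 s2 ∧ RegularWRT s2 s1

/-- `(Y, s1, s2)` is pairwise T3. -/
def PairwiseT3 {Y : Type v} (s1 s2 : TopologicalSpace Y) : Prop :=
  PairwiseRegular s1 s2 ∧ PairwiseT1 s1 s2

/-- `s1` is locally compact with respect to `s2`. -/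
def LocallyCompactWRT {Y : Type v} (s1 s2 : TopologicalSpace Y) : Prop :=
  ∀ x : Y, ∃ N : Set Y, N ∈ @nhds Y s2 x ∧ @IsCompact Y s1 N

/-- `(Y, s1, s2)` is pairwise locally compact. -/
def PairwiseLocallyCompact {Y : Type v} (s1 s2 : TopologicalSpace Y) : Prop :=
  LocallyCompactWRT s1 s2 ∧ LocallyCompactWRT s2 s1

/-- A topological space is a P-space if the union of countably many closed sets is closed. -/
def IsPSpaceTop {Y : Type v} (s : TopologicalSpace Y) : Prop :=
  ∀ C : ℕ → Set Y, (∀ n, IsClosed[s] (C n)) → IsClosed[s] (⋃ n, C n)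

/-- `(Y, s1, s2)` is a pairwise P-space. -/
def PairwisePSpace {Y : Type v} (s1 s2 : TopologicalSpace Y) : Prop :=
  IsPSpaceTop s1 ∧ IsPSpaceTop s2

/-- Separation of a point from an `s1`-compact set: an `s2`-open set around the point and
an `s1`-open set around the compact set, disjoint. -/
lemma btds_sep {Y : Type v} (s1 s2 : TopologicalSpace Y)
    (hT1 : PairwiseT1 s1 s2) (hreg : RegularWRT s2 s1)
    (x : Y) (K : Set Y) (hK : @IsCompact Y s1 K) (hx : x ∉ K) :
    ∃ G A : Set Y, IsOpen[s2] G ∧ IsOpen[s1] A ∧ x ∈ G ∧ K ⊆ A ∧ G ∩ A = ∅ := by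
  have hs2T1 : ∀ y : Y, IsClosed[s2] ({y} : Set Y) := by
    intro y
    letI := s2
    haveI : T1Space Y := by
      rw [t1Space_iff_exists_open]
      intro a b hab
      obtain ⟨U, V, hU, hV, _, _, hbV, haV⟩ := hT1 b a (Ne.symm hab)
      exact ⟨V, hV, hbV, haV⟩
    exact isClosed_singleton
  -- for each y in K, separate x (s2-open) from y (s1-open)
  have hsep : ∀ y : K, ∃ G A : Set Y, IsOpen[s2] G ∧ IsOpen[s1] A ∧ x ∈ G ∧
      (y : Y) ∈ A ∧ G ∩ A = ∅ := by
    rintro ⟨y, hy⟩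
    have hxy : x ∉ ({y} : Set Y) := by
      simp only [mem_singleton_iff]
      rintro rfl; exact hx hy
    obtain ⟨G, A, hG, hA, hxG, hyA, hGA⟩ := hreg x {y} (hs2T1 y) hxy
    exact ⟨G, A, hG, hA, hxG, hyA rfl, hGA⟩
  choose G A hG hA hxG hyA hGA using hsep
  letI := s1
  have hcover : K ⊆ ⋃ y : K, A y := fun z hz =>
    mem_iUnion.mpr ⟨⟨z, hz⟩, hyA ⟨z, hz⟩⟩
  obtain ⟨t, ht⟩ := hK.elim_finite_subcover A hA hcover
  refine ⟨⋂ y ∈ t, G y, ⋃ y ∈ t, A y, ?_, ?_, ?_, ht, ?_⟩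
  · letI := s2
    exact isOpen_biInter_finset fun y _ => hG y
  · exact isOpen_biUnion fun y _ => hA y
  · exact mem_biInter fun y _ => hxG y
  · ext z
    simp only [mem_inter_iff, mem_iInter, mem_iUnion, mem_empty_iff_false, iff_false]
    rintro ⟨h1, y, hyt, h2⟩
    have : z ∈ G y ∩ A y := ⟨h1 y hyt, h2⟩
    rw [hGA y] at this
    exact this

/-- Under pairwise T1, regularity of `s2` w.r.t. `s1` and local compactness of `s1`
w.r.t. `s2`, every `s1`-open set is `s2`-open. -/
lemma btds_open_trans {Y : Type v} (s1 s2 : TopologicalSpace Y)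
    (hT1 : PairwiseT1 s1 s2) (hreg : RegularWRT s2 s1)
    (hLC : LocallyCompactWRT s1 s2) :
    ∀ U : Set Y, IsOpen[s1] U → IsOpen[s2] U := by
  intro U hU
  letI := s2
  rw [isOpen_iff_forall_mem_open]
  intro x hxU
  obtain ⟨N, hN2, hNc⟩ := hLC x
  have hK : @IsCompact Y s1 (N ∩ Uᶜ) := by
    letI := s1
    exact hNc.inter_right hU.isClosed_compl
  have hxK : x ∉ N ∩ Uᶜ := fun h => h.2 hxU
  obtain ⟨G, A, hG, hA, hxG, hKA, hGA⟩ := btds_sep s1 s2 hT1 hreg x _ hK hxK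
  refine ⟨G ∩ interior N, ?_, hG.inter isOpen_interior, hxG, mem_interior_iff_mem_nhds.mpr hN2⟩
  rintro z ⟨hzG, hzN⟩
  by_contra hzU
  have hzK : z ∈ N ∩ Uᶜ := ⟨interior_subset hzN, hzU⟩
  have : z ∈ G ∩ A := ⟨hzG, hKA hzK⟩
  rw [hGA] at this
  exact this

/-- `PairwiseT1` is symmetric. -/
lemma pairwiseT1_symm {Y : Type v} {s1 s2 : TopologicalSpace Y}
    (h : PairwiseT1 s1 s2) : PairwiseT1 s2 s1 := by
  intro x y hxy
  obtain ⟨U, V, hU, hV, hyU, hxU, hxV, hyV⟩ := h y x (Ne.symm hxy)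
  exact ⟨V, U, hV, hU, hxV, hyV, hyU, hxU⟩

/-- For a single regular topology, the `H`-Rothberger selection principle is equivalent to
the almost version. -/
lemma s1h_roth_iff_almost {X : Type u} {Y : Type v} [s : TopologicalSpace Y]
    (H : X × unitInterval → Y) (hreg : RegularWRT s s) :
    S1H H (OpenCovers s) (OpenCovers s) ↔ S1H H (OpenCovers s) (ClosureCovers s s) := by
  constructor
  · intro h 𝒰 h𝒰 x hx
    obtain ⟨U, hU1, hU2, hU3⟩ := h 𝒰 h𝒰 x hx
    refine ⟨U, hU1, hU2, hU3.1, ?_⟩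
    have hsub : ⋃₀ Set.range U ⊆ ⋃ V ∈ Set.range U, closure V := by
      rintro y ⟨V, hV, hyV⟩
      exact mem_biUnion hV (subset_closure hyV)
    exact univ_subset_iff.mp (hU3.2 ▸ hsub)
  · intro h 𝒰 h𝒰 x hx
    set 𝒲 : ℕ → Set (Set Y) := fun n => {V | IsOpen V ∧ ∃ U ∈ 𝒰 n, closure V ⊆ U} with h𝒲def
    have h𝒲 : ∀ n, 𝒲 n ∈ OpenCovers s := by
      intro n
      refine ⟨fun V hV => hV.1, ?_⟩
      rw [eq_univ_iff_forall]
      intro y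
      have hy : y ∈ ⋃₀ 𝒰 n := (h𝒰 n).2 ▸ mem_univ y
      obtain ⟨U, hU, hyU⟩ := hy
      have hUo : IsOpen U := (h𝒰 n).1 U hU
      obtain ⟨A, B, hA, hB, hyA, hsubB, hAB⟩ :=
        hreg y Uᶜ hUo.isClosed_compl (fun hc => hc hyU)
      have hclA : closure A ⊆ U := by
        have h1 : A ⊆ Bᶜ := fun z hz hzB => by
          have : z ∈ A ∩ B := ⟨hz, hzB⟩
          rw [hAB] at this; exact this
        have h2 : closure A ⊆ Bᶜ := closure_minimal h1 hB.isClosed_compl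
        exact h2.trans (compl_subset_comm.mp hsubB)
      exact ⟨A, ⟨hA, U, hU, hclA⟩, hyA⟩
    have hx' : ∀ n, H (x, 0) ∈ ⋃₀ 𝒲 n := fun n => (h𝒲 n).2 ▸ mem_univ _
    obtain ⟨V, hV1, hV2, hV3⟩ := h 𝒲 h𝒲 x hx'
    choose U hU1 hU2 using fun n => (hV1 n).2
    refine ⟨U, hU1, fun n => hU2 n (subset_closure (hV2 n)), ?_, ?_⟩
    · rintro W ⟨n, rfl⟩
      exact (h𝒰 n).1 _ (hU1 n)
    · have hcl : (⋃ W ∈ Set.range V, closure W) = univ := hV3.2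
      rw [biUnion_range] at hcl
      have hsub : (⋃ n, closure (V n)) ⊆ ⋃₀ Set.range U := by
        rw [sUnion_range]
        exact iUnion_mono fun n => hU2 n
      exact univ_subset_iff.mp (hcl ▸ hsub)

theorem hRothberger_iff_hAlmostRothberger {X : Type u} {Y : Type v}
    (t1 t2 : TopologicalSpace X) (s1 s2 : TopologicalSpace Y)
    (f : X → X) (g : Y → Y) (F : X → Y)
    (hf : PairwiseContinuous t1 t2 t1 t2 f) (hg : PairwiseContinuous s1 s2 s1 s2 g)
    (hF : PairwiseContinuous t1 t2 s1 s2 F)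
    (H : X × unitInterval → Y) (hH : IsBTDSHomotopy t1 t2 s1 s2 f g F H)
    (hT3 : PairwiseT3 s1 s2) (hLC : PairwiseLocallyCompact s1 s2) :
    HRothberger H s1 s2 ↔ HAlmostRothberger H s1 s2 := by
  obtain ⟨⟨hreg12, hreg21⟩, hT1⟩ := hT3
  have h12 : ∀ U : Set Y, IsOpen[s1] U → IsOpen[s2] U :=
    btds_open_trans s1 s2 hT1 hreg21 hLC.1
  have h21 : ∀ U : Set Y, IsOpen[s2] U → IsOpen[s1] U :=
    btds_open_trans s2 s1 (pairwiseT1_symm hT1) hreg12 hLC.2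
  have heq : s1 = s2 := by
    apply TopologicalSpace.ext
    ext U
    exact ⟨h12 U, h21 U⟩
  subst heq
  have hiff := @s1h_roth_iff_almost X Y s1 H hreg12
  constructor
  · rintro ⟨ha, hb⟩
    exact ⟨hiff.mp ha, hiff.mp hb⟩
  · rintro ⟨ha, hb⟩
    exact ⟨hiff.mpr ha, hiff.mpr hb⟩
end

section
/- Let (X,f) and (Y,g) be BTDSs, where (X,τ1,τ2) and (Y,ψ1,ψ2) are bitopological spaces, and suppose f ≈^H_F g via a BTDS-homotopy H. If (Y,ψ1,ψ2) is a pairwise P-space, then Y has the H-almost Rothberger property if and only if Y has the H-weak Rothberger property. -/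
open Set Topology

universe u v w

lemma S1H_mono {X : Type u} {Y : Type v} (H : X × unitInterval → Y)
    {A B B' : Set (Set (Set Y))}
    (hBB : ∀ U : ℕ → Set Y, Set.range U ∈ B → Set.range U ∈ B')
    (h : S1H H A B) : S1H H A B' := by
  intro 𝒰 h𝒰 x hx
  obtain ⟨U, hU1, hU2, hU3⟩ := h 𝒰 h𝒰 x hx
  exact ⟨U, hU1, hU2, hBB U hU3⟩

lemma closureCovers_dense {Y : Type v} (si sj : TopologicalSpace Y)
    (U : ℕ → Set Y) (h : Set.range U ∈ ClosureCovers si sj) :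
    Set.range U ∈ DenseFamilies si sj := by
  refine ⟨h.1, ?_⟩
  apply eq_univ_of_univ_subset
  rw [← h.2]
  refine iUnion₂_subset fun V hV => ?_
  exact @closure_mono Y sj _ _ (subset_sUnion_of_mem hV)

lemma dense_closureCovers {Y : Type v} (si sj : TopologicalSpace Y)
    (hP : IsPSpaceTop sj)
    (U : ℕ → Set Y) (h : Set.range U ∈ DenseFamilies si sj) :
    Set.range U ∈ ClosureCovers si sj := by
  refine ⟨h.1, ?_⟩
  apply eq_univ_of_univ_subset
  have hcl : IsClosed[sj] (⋃ n, @closure Y sj (U n)) :=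
    hP _ fun n => @isClosed_closure Y sj (U n)
  have hsub : ⋃₀ Set.range U ⊆ ⋃ n, @closure Y sj (U n) := by
    rw [sUnion_range]
    exact iUnion_mono fun n => @subset_closure Y sj (U n)
  have := @closure_minimal Y sj _ _ hsub hcl
  rw [h.2] at this
  calc univ ⊆ ⋃ n, @closure Y sj (U n) := this
    _ ⊆ ⋃ V ∈ Set.range U, @closure Y sj V := by
        refine iUnion_subset fun n => subset_iUnion₂_of_subset (U n) ⟨n, rfl⟩ le_rfl

theorem hAlmostRothberger_iff_hWeakRothberger {X : Type u} {Y : Type v}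
    (t1 t2 : TopologicalSpace X) (s1 s2 : TopologicalSpace Y)
    (f : X → X) (g : Y → Y) (F : X → Y)
    (hf : PairwiseContinuous t1 t2 t1 t2 f) (hg : PairwiseContinuous s1 s2 s1 s2 g)
    (hF : PairwiseContinuous t1 t2 s1 s2 F)
    (H : X × unitInterval → Y) (hH : IsBTDSHomotopy t1 t2 s1 s2 f g F H)
    (hP : PairwisePSpace s1 s2) :
    HAlmostRothberger H s1 s2 ↔ HWeakRothberger H s1 s2 := by
  constructor
  · rintro ⟨h1, h2⟩
    exact ⟨S1H_mono H (closureCovers_dense s1 s2) h1,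
      S1H_mono H (closureCovers_dense s2 s1) h2⟩
  · rintro ⟨h1, h2⟩
    exact ⟨S1H_mono H (dense_closureCovers s1 s2 hP.2) h1,
      S1H_mono H (dense_closureCovers s2 s1 hP.1) h2⟩
end

section
/- Let (X,f) and (Y,g) be BTDSs, where (X,τ1,τ2) and (Y,ψ1,ψ2) are bitopological spaces, and suppose f ≈^H_F g via a BTDS-homotopy H. If (Y,ψ1,ψ2) is a pairwise P-space, then Y has the H-almost Menger property if and only if Y has the H-weak Menger property. -/
open Set Topology

universe u v w

lemma closureCovers_subset_denseFamilies {Y : Type v} (si sj : TopologicalSpace Y) :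
    ClosureCovers si sj ⊆ DenseFamilies si sj := by
  rintro 𝒰 ⟨h1, h2⟩
  refine ⟨h1, eq_univ_of_forall fun y => ?_⟩
  have hy : y ∈ ⋃ U ∈ 𝒰, @closure Y sj U := h2 ▸ mem_univ y
  obtain ⟨U, hU, hyU⟩ := mem_iUnion₂.mp hy
  exact (@closure_mono Y sj _ _ (subset_sUnion_of_mem hU)) hyU

lemma sfinH_mono {X : Type u} {Y : Type v} (H : X × unitInterval → Y)
    {A B B' : Set (Set (Set Y))} (hBB : B ⊆ B') (h : SfinH H A B) : SfinH H A B' := by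
  intro 𝒰 h𝒰 x hx
  obtain ⟨𝒱, h1, h2, h3⟩ := h 𝒰 h𝒰 x hx
  exact ⟨𝒱, h1, h2, hBB h3⟩

lemma pspace_biUnion_closure_closed {Y : Type v} (s : TopologicalSpace Y)
    (hP : IsPSpaceTop s) (𝒮 : Set (Set Y)) (hc : 𝒮.Countable) :
    IsClosed[s] (⋃ S ∈ 𝒮, @closure Y s S) := by
  rcases 𝒮.eq_empty_or_nonempty with h | h
  · simp only [h, mem_empty_iff_false, iUnion_of_empty, iUnion_empty]
    exact @isClosed_empty Y s
  · obtain ⟨e, rfl⟩ := hc.exists_eq_range h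
    have heq : (⋃ S ∈ range e, @closure Y s S) = ⋃ n, @closure Y s (e n) := by
      rw [biUnion_range]
    rw [heq]
    exact hP _ fun n => @isClosed_closure Y s (e n)

lemma weak_to_almost {X : Type u} {Y : Type v} (H : X × unitInterval → Y)
    (si sj : TopologicalSpace Y) (hPj : IsPSpaceTop sj)
    (hw : SfinH H (OpenCovers si) (DenseFamilies si sj)) :
    SfinH H (OpenCovers si) (ClosureCovers si sj) := by
  intro 𝒰 h𝒰 x hx
  obtain ⟨𝒱, h1, h2, h3⟩ := hw 𝒰 h𝒰 x hx
  refine ⟨𝒱, h1, h2, h3.1, ?_⟩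
  have hcnt : (⋃ n, 𝒱 n).Countable := countable_iUnion fun n => (h1 n).1.countable
  have hclosed := pspace_biUnion_closure_closed sj hPj _ hcnt
  have hsub : ⋃₀ (⋃ n, 𝒱 n) ⊆ ⋃ U ∈ ⋃ n, 𝒱 n, @closure Y sj U := by
    rintro y ⟨U, hU, hyU⟩
    exact mem_iUnion₂.mpr ⟨U, hU, (@subset_closure Y sj U) hyU⟩
  have hcl : @closure Y sj (⋃₀ ⋃ n, 𝒱 n) ⊆ ⋃ U ∈ ⋃ n, 𝒱 n, @closure Y sj U :=
    @closure_minimal Y sj _ _ hsub hclosed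
  apply eq_univ_of_univ_subset
  rw [← h3.2]
  exact hcl

theorem hAlmostMenger_iff_hWeakMenger {X : Type u} {Y : Type v}
    (t1 t2 : TopologicalSpace X) (s1 s2 : TopologicalSpace Y)
    (f : X → X) (g : Y → Y) (F : X → Y)
    (hf : PairwiseContinuous t1 t2 t1 t2 f) (hg : PairwiseContinuous s1 s2 s1 s2 g)
    (hF : PairwiseContinuous t1 t2 s1 s2 F)
    (H : X × unitInterval → Y) (hH : IsBTDSHomotopy t1 t2 s1 s2 f g F H)
    (hP : PairwisePSpace s1 s2) :
    HAlmostMenger H s1 s2 ↔ HWeakMenger H s1 s2 := by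
  constructor
  · rintro ⟨h1, h2⟩
    exact ⟨sfinH_mono H (closureCovers_subset_denseFamilies s1 s2) h1,
      sfinH_mono H (closureCovers_subset_denseFamilies s2 s1) h2⟩
  · rintro ⟨h1, h2⟩
    exact ⟨weak_to_almost H s1 s2 hP.2 h1, weak_to_almost H s2 s1 hP.1 h2⟩
end

section
/- Let (X,f) and (Y,g) be BTDSs, where (X,τ1,τ2) and (Y,ψ1,ψ2) are bitopological spaces, and suppose f ≈^H_F g via a BTDS-homotopy H. If (Y,ψ1,ψ2) is a pairwise T3, pairwise locally compact, pairwise P-space, then Y has the H-Menger property if and only if Y has the H-weak Menger property. -/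
open Set Topology

universe u v w

section AuxLemmas

variable {Z : Type w}

lemma aux_singleton_closed (s : TopologicalSpace Z)
    (hT1 : ∀ x y : Z, x ≠ y → ∃ U, IsOpen[s] U ∧ x ∈ U ∧ y ∉ U) (p : Z) :
    IsClosed[s] ({p} : Set Z) := by
  letI := s
  rw [← isOpen_compl_iff, isOpen_iff_forall_mem_open]
  intro q hq
  obtain ⟨U, hU, hqU, hpU⟩ := hT1 q p hq
  exact ⟨U, fun z hz hzp => hpU (hzp ▸ hz), hU, hqU⟩

lemma aux_finite_closed (s : TopologicalSpace Z)
    (hT1 : ∀ x y : Z, x ≠ y → ∃ U, IsOpen[s] U ∧ x ∈ U ∧ y ∉ U)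
    {A : Set Z} (hA : A.Finite) : IsClosed[s] A := by
  letI := s
  have : A = ⋃ p ∈ A, ({p} : Set Z) := by simp
  rw [this]
  exact hA.isClosed_biUnion (fun p _ => aux_singleton_closed s hT1 p)

lemma aux_compact_finite (s : TopologicalSpace Z)
    (hT1 : ∀ x y : Z, x ≠ y → ∃ U, IsOpen[s] U ∧ x ∈ U ∧ y ∉ U)
    (hP : IsPSpaceTop s) {N : Set Z} (hN : @IsCompact Z s N) : N.Finite := by
  letI := s
  by_contra hinf
  have hinf' : N.Infinite := hinf
  let e := hinf'.natEmbedding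
  set c : ℕ → Z := fun n => (e n : Z) with hc
  have hcN : ∀ n, c n ∈ N := fun n => (e n).2
  have hcinj : Function.Injective c := fun a b h => e.injective (Subtype.ext h)
  set D : ℕ → Set Z := fun n => ⋃ m, (if m = n then (∅ : Set Z) else {c m}) with hD
  have hDclosed : ∀ n, IsClosed (D n) := by
    intro n
    apply hP
    intro m
    by_cases h : m = n <;> simp [h, aux_singleton_closed s hT1]
  have hmemD : ∀ m n, m ≠ n → c m ∈ D n := by
    intro m n hmn
    exact Set.mem_iUnion.2 ⟨m, by simp [hmn]⟩
  have hnotD : ∀ n, c n ∉ D n := by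
    intro n hn
    obtain ⟨m, hm⟩ := Set.mem_iUnion.1 hn
    by_cases h : m = n
    · simp [h] at hm
    · simp [h] at hm
      exact h (hcinj hm.symm)
  have hcover : N ⊆ ⋃ n, (D n)ᶜ := by
    intro p hp
    by_cases h : ∃ m, p = c m
    · obtain ⟨m, rfl⟩ := h
      exact Set.mem_iUnion.2 ⟨m, hnotD m⟩
    · refine Set.mem_iUnion.2 ⟨0, ?_⟩
      intro hpD
      obtain ⟨m, hm⟩ := Set.mem_iUnion.1 hpD
      by_cases h0 : m = 0 <;> simp [h0] at hm
      · exact h ⟨m, hm⟩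
  obtain ⟨t, ht⟩ := hN.elim_finite_subcover (fun n => (D n)ᶜ)
    (fun n => (hDclosed n).isOpen_compl) hcover
  set m := (t.sup id) + 1 with hm
  have hmt : m ∉ t := by
    intro hmem
    have h2 := Finset.le_sup (f := id) hmem
    rw [id_eq, hm] at h2
    omega
  have := ht (hcN m)
  obtain ⟨n, hn, hcn⟩ := Set.mem_iUnion₂.1 this
  exact hcn (hmemD m n (fun h => hmt (h ▸ hn)))

lemma aux_discrete (s1 s2 : TopologicalSpace Z)
    (hT1 : ∀ x y : Z, x ≠ y → ∃ V, IsOpen[s2] V ∧ x ∈ V ∧ y ∉ V)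
    (hfin : ∀ N : Set Z, @IsCompact Z s1 N → N.Finite)
    (hLC : LocallyCompactWRT s1 s2) :
    ∀ A : Set Z, IsOpen[s2] A := by
  letI := s2
  have hsingle : ∀ y : Z, IsOpen ({y} : Set Z) := by
    intro y
    obtain ⟨N, hN, hNc⟩ := hLC y
    obtain ⟨V, hVN, hVopen, hyV⟩ := mem_nhds_iff.1 hN
    have hVfin : V.Finite := (hfin N hNc).subset hVN
    have hclosed : IsClosed (V \ {y}) :=
      aux_finite_closed s2 hT1 (hVfin.subset Set.diff_subset)
    have : ({y} : Set Z) = V ∩ (V \ {y})ᶜ := by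
      ext z
      simp only [Set.mem_singleton_iff, Set.mem_inter_iff, Set.mem_compl_iff,
        Set.mem_diff, not_and, not_not]
      constructor
      · rintro rfl; exact ⟨hyV, fun _ => rfl⟩
      · rintro ⟨hzV, h⟩; exact h hzV
    rw [this]
    exact hVopen.inter hclosed.isOpen_compl
  intro A
  have : A = ⋃ y ∈ A, ({y} : Set Z) := by simp
  rw [this]
  exact isOpen_biUnion (fun y _ => hsingle y)

end AuxLemmas

theorem hMenger_iff_hWeakMenger {X : Type u} {Y : Type v}
    (t1 t2 : TopologicalSpace X) (s1 s2 : TopologicalSpace Y)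
    (f : X → X) (g : Y → Y) (F : X → Y)
    (hf : PairwiseContinuous t1 t2 t1 t2 f) (hg : PairwiseContinuous s1 s2 s1 s2 g)
    (hF : PairwiseContinuous t1 t2 s1 s2 F)
    (H : X × unitInterval → Y) (hH : IsBTDSHomotopy t1 t2 s1 s2 f g F H)
    (hT3 : PairwiseT3 s1 s2) (hLC : PairwiseLocallyCompact s1 s2)
    (hP : PairwisePSpace s1 s2) :
    HMenger H s1 s2 ↔ HWeakMenger H s1 s2 := by
  obtain ⟨hreg, hT1⟩ := hT3
  obtain ⟨hLC1, hLC2⟩ := hLC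
  obtain ⟨hP1, hP2⟩ := hP
  have hT1s1 : ∀ x y : Y, x ≠ y → ∃ U, IsOpen[s1] U ∧ x ∈ U ∧ y ∉ U := by
    intro x y hxy
    obtain ⟨U, V, hU, hV, hxU, hyU, hyV, hxV⟩ := hT1 x y hxy
    exact ⟨U, hU, hxU, hyU⟩
  have hT1s2 : ∀ x y : Y, x ≠ y → ∃ V, IsOpen[s2] V ∧ x ∈ V ∧ y ∉ V := by
    intro x y hxy
    obtain ⟨U, V, hU, hV, hyU, hxU, hxV, hyV⟩ := hT1 y x hxy.symm
    exact ⟨V, hV, hxV, hyV⟩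
  have hfin1 : ∀ N : Set Y, @IsCompact Y s1 N → N.Finite :=
    fun N hN => aux_compact_finite s1 hT1s1 hP1 hN
  have hfin2 : ∀ N : Set Y, @IsCompact Y s2 N → N.Finite :=
    fun N hN => aux_compact_finite s2 hT1s2 hP2 hN
  have hdisc2 : ∀ A : Set Y, IsOpen[s2] A := aux_discrete s1 s2 hT1s2 hfin1 hLC1
  have hdisc1 : ∀ A : Set Y, IsOpen[s1] A := aux_discrete s2 s1 hT1s1 hfin2 hLC2
  have hcl1 : ∀ A : Set Y, @closure Y s1 A = A := by
    intro A
    exact @IsClosed.closure_eq Y s1 A (by rw [← @isOpen_compl_iff Y _ s1]; exact hdisc1 _)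
  have hcl2 : ∀ A : Set Y, @closure Y s2 A = A := by
    intro A
    exact @IsClosed.closure_eq Y s2 A (by rw [← @isOpen_compl_iff Y _ s2]; exact hdisc2 _)
  have hD12 : DenseFamilies s1 s2 = OpenCovers s2 := by
    ext 𝒰
    simp only [DenseFamilies, OpenCovers, Set.mem_setOf_eq, hcl2]
    exact ⟨fun h => ⟨fun U _ => hdisc2 U, h.2⟩, fun h => ⟨fun U _ => hdisc1 U, h.2⟩⟩
  have hD21 : DenseFamilies s2 s1 = OpenCovers s1 := by
    ext 𝒰
    simp only [DenseFamilies, OpenCovers, Set.mem_setOf_eq, hcl1]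
    exact ⟨fun h => ⟨fun U _ => hdisc1 U, h.2⟩, fun h => ⟨fun U _ => hdisc2 U, h.2⟩⟩
  unfold HMenger HWeakMenger
  rw [hD12, hD21]
end

section
/- Let ([0,1],f) and (X,g) be BTDSs, where ([0,1],σ,σ) (σ the usual topology) and (X,ψ1,ψ2) are bitopological spaces, and suppose f ≈^PH_F g | x→y via a BTDS-path homotopy H. If (X,ψ1,ψ2) is a pairwise T3, pairwise locally compact, pairwise P-space, then the following are equivalent: (i) X has the PH-Rothberger property; (ii) X has the PH-almost Rothberger property; (iii) X has the PH-weak Rothberger property. -/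
open Set Topology

universe u v w

/-- In a T1 P-space, every countable set is closed. -/
lemma countable_closed_aux {Y : Type v} (s : TopologicalSpace Y)
    (hT1 : ∀ p q : Y, p ≠ q → ∃ U, IsOpen[s] U ∧ p ∈ U ∧ q ∉ U)
    (hP : IsPSpaceTop s) : ∀ C : Set Y, C.Countable → IsClosed[s] C := by
  letI := s
  haveI : T1Space Y := by
    refine t1Space_iff_exists_open.mpr ?_
    intro p q hpq
    exact hT1 p q hpq
  intro C hC
  rcases C.eq_empty_or_nonempty with h | h
  · simpa [h] using isClosed_empty
  · obtain ⟨f, rfl⟩ := Set.Countable.exists_eq_range hC h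
    have : Set.range f = ⋃ n, {f n} := by
      ext z; simp [Set.mem_range, eq_comm]
    rw [this]
    exact hP (fun n => {f n}) (fun n => isClosed_singleton)

/-- If all countable sets are closed, every compact set is finite. -/
lemma compact_finite_aux {Y : Type v} (s : TopologicalSpace Y)
    (hcl : ∀ C : Set Y, C.Countable → IsClosed[s] C)
    {K : Set Y} (hK : @IsCompact Y s K) : K.Finite := by
  letI := s
  by_contra hfin
  have hinf : K.Infinite := hfin
  set e := hinf.natEmbedding
  set D : Set Y := Set.range (fun n => (e n : Y)) with hD
  have hDK : D ⊆ K := by rintro _ ⟨n, rfl⟩; exact (e n).2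
  have hDct : D.Countable := Set.countable_range _
  have hDinf : D.Infinite := by
    apply Set.infinite_range_of_injective
    intro a b hab
    exact e.injective (Subtype.ext hab)
  set U : Y → Set Y := fun z => (D \ {z})ᶜ with hU
  have hUopen : ∀ z : Y, IsOpen (U z) := by
    intro z
    exact (hcl (D \ {z}) (hDct.mono Set.diff_subset)).isOpen_compl
  have hKcover : K ⊆ ⋃ z, U z := by
    intro z _
    exact Set.mem_iUnion.mpr ⟨z, by simp [hU]⟩
  obtain ⟨t, ht⟩ := hK.elim_finite_subcover U hUopen hKcover
  have : D ⊆ (t : Set Y) := by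
    intro d hd
    obtain ⟨z, hz, hdz⟩ := Set.mem_iUnion₂.mp (ht (hDK hd))
    have : d = z := by
      by_contra hne
      exact hdz ⟨hd, hne⟩
    exact this ▸ hz
  exact hDinf (t.finite_toSet.subset this)

/-- If countable sets are `s`- and `s'`-closed, and each point has an `s'`-neighbourhood
that is `s`-compact, then `s'` is discrete. -/
lemma all_open_aux {Y : Type v} (s s' : TopologicalSpace Y)
    (hcl : ∀ C : Set Y, C.Countable → IsClosed[s] C)
    (hcl' : ∀ C : Set Y, C.Countable → IsClosed[s'] C)
    (hLC : ∀ x : Y, ∃ N : Set Y, N ∈ @nhds Y s' x ∧ @IsCompact Y s N) :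
    ∀ A : Set Y, IsOpen[s'] A := by
  letI := s'
  have hsing : ∀ x : Y, IsOpen ({x} : Set Y) := by
    intro x
    obtain ⟨N, hN, hNK⟩ := hLC x
    have hNfin : N.Finite := compact_finite_aux s hcl hNK
    have h2 : IsOpen ((N \ {x})ᶜ) :=
      (hcl' (N \ {x}) ((hNfin.subset Set.diff_subset).countable)).isOpen_compl
    have hx : x ∈ interior N := mem_interior_iff_mem_nhds.mpr hN
    have heq : ({x} : Set Y) = interior N ∩ (N \ {x})ᶜ := by
      ext z
      constructor
      · rintro rfl
        exact ⟨hx, fun h => h.2 rfl⟩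
      · rintro ⟨hz1, hz2⟩
        have hzN : z ∈ N := interior_subset hz1
        by_contra hne
        exact hz2 ⟨hzN, fun h => hne (by simpa using h)⟩
    rw [heq]
    exact isOpen_interior.inter h2
  intro A
  have : A = ⋃ x ∈ A, ({x} : Set Y) := by simp
  rw [this]
  exact isOpen_biUnion (fun x _ => hsing x)

theorem phRothberger_tfae {X : Type u} (s1 s2 : TopologicalSpace X)
    (f : unitInterval → unitInterval) (g : X → X) (x y : X) (F : unitInterval → X)
    (hf : PairwiseContinuous inferInstance inferInstance inferInstance inferInstance f)
    (hg : PairwiseContinuous s1 s2 s1 s2 g)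
    (hF : IsBitopPath s1 s2 F x y)
    (H : unitInterval × unitInterval → X) (hH : IsBTDSPathHomotopy s1 s2 f g F x y H)
    (hT3 : PairwiseT3 s1 s2) (hLC : PairwiseLocallyCompact s1 s2)
    (hP : PairwisePSpace s1 s2) :
    (PHRothberger H s1 s2 ↔ PHAlmostRothberger H s1 s2) ∧
    (PHAlmostRothberger H s1 s2 ↔ PHWeakRothberger H s1 s2) := by
  -- Both topologies are forced to be discrete.
  have hT1s1 : ∀ p q : X, p ≠ q → ∃ U, IsOpen[s1] U ∧ p ∈ U ∧ q ∉ U := by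
    intro p q hpq
    obtain ⟨U, V, hU, hV, hpU, hqU, hqV, hpV⟩ := hT3.2 p q hpq
    exact ⟨U, hU, hpU, hqU⟩
  have hT1s2 : ∀ p q : X, p ≠ q → ∃ U, IsOpen[s2] U ∧ p ∈ U ∧ q ∉ U := by
    intro p q hpq
    obtain ⟨U, V, hU, hV, hqU', hpU', hpV', hqV'⟩ := hT3.2 q p hpq.symm
    exact ⟨V, hV, hpV', hqV'⟩
  have hcl1 : ∀ C : Set X, C.Countable → IsClosed[s1] C :=
    countable_closed_aux s1 hT1s1 hP.1
  have hcl2 : ∀ C : Set X, C.Countable → IsClosed[s2] C :=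
    countable_closed_aux s2 hT1s2 hP.2
  have hopen2 : ∀ A : Set X, IsOpen[s2] A := all_open_aux s1 s2 hcl1 hcl2 hLC.1
  have hopen1 : ∀ A : Set X, IsOpen[s1] A := all_open_aux s2 s1 hcl2 hcl1 hLC.2
  have hclo1 : ∀ A : Set X, @closure X s1 A = A := by
    letI := s1
    intro A
    exact IsClosed.closure_eq (by simpa using (hopen1 Aᶜ).isClosed_compl)
  have hclo2 : ∀ A : Set X, @closure X s2 A = A := by
    letI := s2
    intro A
    exact IsClosed.closure_eq (by simpa using (hopen2 Aᶜ).isClosed_compl)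
  -- All six cover collections coincide with the plain covers.
  set C : Set (Set (Set X)) := {𝒰 : Set (Set X) | ⋃₀ 𝒰 = univ} with hC
  have hO1 : OpenCovers s1 = C := by
    ext 𝒰
    simp only [OpenCovers, hC, mem_setOf_eq]
    exact ⟨fun h => h.2, fun h => ⟨fun U _ => hopen1 U, h⟩⟩
  have hO2 : OpenCovers s2 = C := by
    ext 𝒰
    simp only [OpenCovers, hC, mem_setOf_eq]
    exact ⟨fun h => h.2, fun h => ⟨fun U _ => hopen2 U, h⟩⟩
  have hbi2 : ∀ 𝒰 : Set (Set X), (⋃ U ∈ 𝒰, @closure X s2 U) = ⋃₀ 𝒰 := by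
    intro 𝒰
    rw [Set.sUnion_eq_biUnion]
    exact Set.iUnion₂_congr (fun U _ => hclo2 U)
  have hbi1 : ∀ 𝒰 : Set (Set X), (⋃ U ∈ 𝒰, @closure X s1 U) = ⋃₀ 𝒰 := by
    intro 𝒰
    rw [Set.sUnion_eq_biUnion]
    exact Set.iUnion₂_congr (fun U _ => hclo1 U)
  have hCC12 : ClosureCovers s1 s2 = C := by
    ext 𝒰
    simp only [ClosureCovers, hC, mem_setOf_eq, hbi2]
    exact ⟨fun h => h.2, fun h => ⟨fun U _ => hopen1 U, h⟩⟩
  have hCC21 : ClosureCovers s2 s1 = C := by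
    ext 𝒰
    simp only [ClosureCovers, hC, mem_setOf_eq, hbi1]
    exact ⟨fun h => h.2, fun h => ⟨fun U _ => hopen2 U, h⟩⟩
  have hDF12 : DenseFamilies s1 s2 = C := by
    ext 𝒰
    simp only [DenseFamilies, hC, mem_setOf_eq, hclo2]
    exact ⟨fun h => h.2, fun h => ⟨fun U _ => hopen1 U, h⟩⟩
  have hDF21 : DenseFamilies s2 s1 = C := by
    ext 𝒰
    simp only [DenseFamilies, hC, mem_setOf_eq, hclo1]
    exact ⟨fun h => h.2, fun h => ⟨fun U _ => hopen2 U, h⟩⟩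
  unfold PHRothberger PHAlmostRothberger PHWeakRothberger
  rw [hO1, hO2, hCC12, hCC21, hDF12, hDF21]
  exact ⟨Iff.rfl, Iff.rfl⟩
end
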